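/- Let α ∈ [0, 1/3) and p ∈ (2α, 1]. Suppose among m gradients, at most αm are Byzantine, and screening retains exactly pm gradients including all retained honest ones. If G is the average of retained gradients, ∇H is the average honest gradient, and each honest gradient g_i satisfies ||g_i - ∇H|| ≤ r while each retained Byzantine gradient g_j satisfies ||g_j|| ≤ ||∇H|| + r, then ||G - ∇H|| ≤ (2α/p)(||∇H|| + r) + r. -/

import Mathlib

open Finset

/-- Quantitative Lemma 1 for two-sided norm-based screening (TNBS). -/
theorem tnbs_lemma {d m : ℕ} (hm : 0 < m)
    (g : Fin m → EuclideanSpace ℝ (Fin d))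
    (α p : ℝ) (hα0 : 0 ≤ α) (hα : α < 1 / 3) (hp1 : 2 * α < p) (hp2 : p ≤ 1)
    (B : Finset (Fin m)) (hB : (B.card : ℝ) ≤ α * m) (hBc : Bᶜ.Nonempty)
    (U : Finset (Fin m)) (hU : (U.card : ℝ) = p * m) (hUne : U.Nonempty)
    (gradH : EuclideanSpace ℝ (Fin d))
    (hgradH : gradH = (Bᶜ.card : ℝ)⁻¹ • ∑ i ∈ Bᶜ, g i)
    (G : EuclideanSpace ℝ (Fin d)) (hG : G = (U.card : ℝ)⁻¹ • ∑ i ∈ U, g i)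
    (r : ℝ) (hhonest : ∀ i ∉ B, ‖g i - gradH‖ ≤ r)
    (hretained_honest : Bᶜ ⊆ U)
    (hbyz : ∀ j ∈ U ∩ B, ‖g j‖ ≤ ‖gradH‖ + r) :
    ‖G - gradH‖ ≤ (2 * α / p) * (‖gradH‖ + r) + r := by
  have hp0 : 0 < p := lt_of_le_of_lt (by positivity) hp1
  have hm' : (0:ℝ) < m := by exact_mod_cast hm
  have hn : (0:ℝ) < (U.card : ℝ) := by rw [hU]; positivity
  obtain ⟨i0, hi0⟩ := hBc
  have hr : 0 ≤ r := le_trans (norm_nonneg _) (hhonest i0 (by simpa using hi0))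
  set X := ‖gradH‖ + r with hX
  have hX0 : 0 ≤ X := by positivity
  set n := (U.card : ℝ) with hn'
  have key : G - gradH = n⁻¹ • ∑ i ∈ U, (g i - gradH) := by
    rw [hG, Finset.sum_sub_distrib, smul_sub, Finset.sum_const, ← Nat.cast_smul_eq_nsmul ℝ,
      smul_smul, inv_mul_cancel₀ hn.ne', one_smul]
  have hnorm : ‖G - gradH‖ ≤ n⁻¹ * ∑ i ∈ U, ‖g i - gradH‖ := by
    rw [key, norm_smul, Real.norm_eq_abs, abs_of_pos (inv_pos.mpr hn)]
    gcongr
    exact norm_sum_le _ _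
  have hsplit : ∑ i ∈ U, ‖g i - gradH‖
      = ∑ i ∈ U ∩ B, ‖g i - gradH‖ + ∑ i ∈ U \ B, ‖g i - gradH‖ :=
    (Finset.sum_inter_add_sum_sdiff U B _).symm
  have h1 : ∑ i ∈ U \ B, ‖g i - gradH‖ ≤ (U \ B).card * r := by
    rw [← nsmul_eq_mul]
    exact Finset.sum_le_card_nsmul _ _ _ fun i hi =>
      hhonest i (Finset.mem_sdiff.mp hi).2
  have h2 : ∑ i ∈ U ∩ B, ‖g i - gradH‖ ≤ (U ∩ B).card * (2 * X) := by
    rw [← nsmul_eq_mul]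
    refine Finset.sum_le_card_nsmul _ _ _ fun i hi => ?_
    calc ‖g i - gradH‖ ≤ ‖g i‖ + ‖gradH‖ := norm_sub_le _ _
      _ ≤ (‖gradH‖ + r) + ‖gradH‖ := by linarith [hbyz i hi]
      _ ≤ 2 * X := by rw [hX]; linarith
  have hab : ((U ∩ B).card : ℝ) ≤ α * m := by
    calc ((U ∩ B).card : ℝ) ≤ (B.card : ℝ) := by
          exact_mod_cast Finset.card_le_card (Finset.inter_subset_right)
      _ ≤ α * m := hB
  have hdb : ((U \ B).card : ℝ) ≤ n := by
    rw [hn']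
    exact_mod_cast Finset.card_le_card (Finset.sdiff_subset)
  have hsum : ∑ i ∈ U, ‖g i - gradH‖ ≤ α * m * (2 * X) + n * r := by
    rw [hsplit]
    have := mul_le_mul_of_nonneg_right hab (by positivity : (0:ℝ) ≤ 2 * X)
    have := mul_le_mul_of_nonneg_right hdb hr
    linarith
  have hfinal : n⁻¹ * ∑ i ∈ U, ‖g i - gradH‖ ≤ 2 * α / p * X + r := by
    have h3 : n⁻¹ * ∑ i ∈ U, ‖g i - gradH‖ ≤ n⁻¹ * (α * m * (2 * X) + n * r) := by
      gcongr
    refine h3.trans ?_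
    rw [hU]
    rw [mul_add, ← mul_assoc, mul_comm ((p * m)⁻¹) _]
    have hpm : (0:ℝ) < p * m := by positivity
    have e1 : (p * m)⁻¹ * (p * m * r) = r := by field_simp
    have e2 : α * m * (2 * X) * (p * m)⁻¹ ≤ 2 * α / p * X := by
      rw [mul_inv_le_iff₀ hpm, div_mul_eq_mul_div, div_mul_eq_mul_div, le_div_iff₀ hp0]
      nlinarith [hX0, hm'.le, hα0, hp0.le]
    linarith [e1, e2]
  linarith [hnorm, hfinal]
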